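/- arXiv:1511.02913 — 2 statements merged into one kernel-verified Lean document; each statement's English description precedes it below -/
import Mathlib

section
/- Let G be a strongly connected digraph with start vertex s, and let u be a strong articulation point that is a common nontrivial dominator of G_s and G_s^R. Then the subgraph of G\u induced by C = V \ (D(u) ∪ D^R(u)) is a strongly connected component of G\u. -/
namespace StrongConn

variable {V : Type*}

/-- `p` is a walk in the digraph `G` from `u` to `v`, recorded as the list of visited vertices. -/
def IsWalk (G : V → V → Prop) (u v : V) (p : List V) : Prop :=
  p.Chain' G ∧ p.head? = some u ∧ p.getLast? = some v

/-- The directed edge `(a,b)` occurs on the walk `p`. -/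
def EdgeOn (a b : V) (p : List V) : Prop := (a, b) ∈ p.zip p.tail

/-- `v` is reachable from `u` in `G`. -/
def Reach (G : V → V → Prop) (u v : V) : Prop := ∃ p, IsWalk G u v p

/-- `u` and `v` are strongly connected in `G`. -/
def SConn (G : V → V → Prop) (u v : V) : Prop := Reach G u v ∧ Reach G v u

def StronglyConnected (G : V → V → Prop) : Prop := ∀ u v, Reach G u v

/-- `G` with the edge `(a,b)` deleted. -/
def DelEdge (G : V → V → Prop) (a b : V) : V → V → Prop :=
  fun x y => G x y ∧ ¬(x = a ∧ y = b)

/-- `G` with the vertex `u` (and all incident edges) deleted. -/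
def DelVertex (G : V → V → Prop) (u : V) : V → V → Prop :=
  fun x y => G x y ∧ x ≠ u ∧ y ≠ u

/-- `C` is a strongly connected component of `G`. -/
def IsSCC (G : V → V → Prop) (C : Set V) : Prop :=
  C.Nonempty ∧ (∀ x ∈ C, ∀ y ∈ C, SConn G x y) ∧ ∀ x ∈ C, ∀ y, SConn G x y → y ∈ C

/-- `(a,b)` is a strong bridge: an edge whose removal increases the number of
strongly connected components, i.e. it separates some strongly connected pair. -/
def IsStrongBridge (G : V → V → Prop) (a b : V) : Prop :=
  G a b ∧ ∃ x y, SConn G x y ∧ ¬ SConn (DelEdge G a b) x y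

/-- `u` is a strong articulation point: removing it increases the number of strongly
connected components, i.e. it separates some strongly connected pair of other vertices. -/
def IsStrongArticulationPoint (G : V → V → Prop) (u : V) : Prop :=
  ∃ x y, x ≠ u ∧ y ≠ u ∧ SConn G x y ∧ ¬ SConn (DelVertex G u) x y

/-- The reverse digraph. -/
def Rev (G : V → V → Prop) : V → V → Prop := fun x y => G y x

/-- `u` dominates `v` in the flow graph `G_s`; equivalently, `u` is an ancestor of `v`
(and `v` a descendant of `u`) in the dominator tree of `G_s`. -/
def Dom (G : V → V → Prop) (s u v : V) : Prop :=
  ∀ p, IsWalk G s v p → u ∈ p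

/-- `u` is the immediate dominator of `v` in `G_s` (the parent of `v` in the dominator tree). -/
def Idom (G : V → V → Prop) (s u v : V) : Prop :=
  u ≠ v ∧ Dom G s u v ∧ ∀ w, w ≠ v → Dom G s w v → Dom G s w u

/-- Edge `(a,b)` is a bridge of the flow graph `G_s`: every walk from `s` to `b` uses it. -/
def IsBridge (G : V → V → Prop) (s a b : V) : Prop :=
  G a b ∧ ∀ p, IsWalk G s b p → EdgeOn a b p

/-- `r` is the head of some bridge of `G_s`, i.e. a non-`s` root in the bridge
decomposition of the dominator tree. -/
def IsBridgeHead (G : V → V → Prop) (s r : V) : Prop :=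
  ∃ a, IsBridge G s a r

/-- `r` is the root of the tree containing `x` in the bridge decomposition of the
dominator tree of `G_s`: `r` dominates `x`, `r` is `s` or a bridge head, and every
bridge head dominating `x` dominates `r`. -/
def IsBDRoot (G : V → V → Prop) (s r x : V) : Prop :=
  Dom G s r x ∧ (r = s ∨ IsBridgeHead G s r) ∧
    ∀ z, Dom G s z x → IsBridgeHead G s z → Dom G s z r

/-- A depth-first search tree of `G` rooted at `s`, given by a parent function and a
preorder numbering. -/
structure DFSTree (G : V → V → Prop) (s : V) where
  parent : V → V
  pre : V → ℕ
  parent_root : parent s = s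
  parent_edge : ∀ v, v ≠ s → G (parent v) v
  root_reach : ∀ v, ∃ n, parent^[n] v = s
  pre_inj : Function.Injective pre
  pre_parent : ∀ v, v ≠ s → pre (parent v) < pre v
  /-- Descendants of a vertex form a contiguous interval in preorder. -/
  interval : ∀ u v w, (∃ n, parent^[n] w = u) → pre u ≤ pre v → pre v ≤ pre w →
      ∃ n, parent^[n] v = u
  /-- The defining property of depth-first search trees: every edge going forward
  in preorder goes to a descendant. -/
  dfs_edge : ∀ u v, G u v → pre u < pre v → ∃ n, parent^[n] v = u

/-- `u` is an ancestor of `v` in the tree `T` (every vertex is an ancestor of itself). -/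
def DFSTree.Anc {G : V → V → Prop} {s : V} (T : DFSTree G s) (u v : V) : Prop :=
  ∃ n, T.parent^[n] v = u

/-- `x ∈ loop(u)` with respect to the tree-ancestor relation `tanc`: `x` is a descendant
of `u` and there is a walk from `x` to `u` using only descendants of `u`. -/
def InLoop (G : V → V → Prop) (tanc : V → V → Prop) (u x : V) : Prop :=
  tanc u x ∧ ∃ p, IsWalk G x u p ∧ ∀ y ∈ p, tanc u y

/-- `hp` is the parent function of the loop nesting tree of `G_s` with respect to the
DFS-tree ancestor relation `tanc`: `hp x` is the nearest proper ancestor `u` of `x`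
in the DFS tree with `x ∈ loop(u)`. -/
def IsLoopParent (G : V → V → Prop) (s : V) (tanc : V → V → Prop) (hp : V → V) : Prop :=
  hp s = s ∧ ∀ x, x ≠ s →
    (tanc (hp x) x ∧ hp x ≠ x ∧ InLoop G tanc (hp x) x ∧
      ∀ u, tanc u x → u ≠ x → InLoop G tanc u x → tanc u (hp x))

/-- `u` is an ancestor of `v` in the loop nesting tree with parent function `hp`. -/
def HAnc (hp : V → V) (u v : V) : Prop := ∃ n, hp^[n] v = u

/-- `w` is the nearest common ancestor of `x` and `y` in the loop nesting tree
with parent function `hp`. -/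
def HNca (hp : V → V) (x y w : V) : Prop :=
  HAnc hp w x ∧ HAnc hp w y ∧ ∀ z, HAnc hp z x → HAnc hp z y → HAnc hp z w

/-- `u` is a nontrivial dominator of `G_s`: `u ≠ s` and `u` is not a leaf of the
dominator tree (it properly dominates some vertex). -/
def NontrivialDom (G : V → V → Prop) (s u : V) : Prop :=
  u ≠ s ∧ ∃ w, w ≠ u ∧ Dom G s u w

/-- `a` and `b` are siblings in the dominator tree of `G_s`. -/
def SiblingInD (G : V → V → Prop) (s a b : V) : Prop :=
  a ≠ b ∧ ∃ w, Idom G s w a ∧ Idom G s w b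

/-- Given the bridge-decomposition root function `r` and loop-nesting parent `hp`,
`z` is a boundary vertex. -/
def Boundary (s : V) (r hp : V → V) (z : V) : Prop := z = s ∨ r (hp z) ≠ r z

/-- `z` is the nearest boundary ancestor of `x` in the loop nesting tree. -/
def IsNearestBoundary (s : V) (r hp : V → V) (x z : V) : Prop :=
  HAnc hp z x ∧ Boundary s r hp z ∧
    ∀ z', HAnc hp z' x → Boundary s r hp z' → HAnc hp z' z

/-- `x` and `y` are 2-edge-connected: no single edge deletion leaves them in
different strongly connected components. -/
def TwoEdgeConnected (G : V → V → Prop) (x y : V) : Prop :=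
  ∀ a b, G a b → SConn (DelEdge G a b) x y



section Aux

variable {G : V → V → Prop} {u a b c : V} {p q : List V}

lemma isWalk_singleton (G : V → V → Prop) (a : V) : IsWalk G a a [a] :=
  ⟨List.isChain_singleton a, rfl, rfl⟩

lemma IsWalk.cons_form (h : IsWalk G a b p) : ∃ t, p = a :: t := by
  obtain ⟨-, hh, -⟩ := h
  cases p with
  | nil => simp at hh
  | cons x t => simp only [List.head?_cons, Option.some.injEq] at hh; exact ⟨t, by rw [hh]⟩

lemma isWalk_rev (h : IsWalk G a b p) : IsWalk (Rev G) b a p.reverse := by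
  obtain ⟨hc, hh, hl⟩ := h
  refine ⟨?_, ?_, ?_⟩
  · rw [List.Chain', List.isChain_reverse]; exact hc
  · rw [List.head?_reverse]; exact hl
  · rw [List.getLast?_reverse]; exact hh

lemma isWalk_trans (hp : IsWalk G a b p) (hq : IsWalk G b c q) :
    ∃ r, IsWalk G a c r ∧ ∀ z ∈ r, z ∈ p ∨ z ∈ q := by
  obtain ⟨t, rfl⟩ := hq.cons_form
  obtain ⟨t', rfl⟩ := hp.cons_form
  obtain ⟨hcp, -, hlp⟩ := hp
  obtain ⟨hcq, -, hlq⟩ := hq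
  refine ⟨(a :: t') ++ t, ⟨?_, rfl, ?_⟩, ?_⟩
  · rw [List.Chain', List.isChain_append]
    refine ⟨hcp, (List.isChain_cons.1 hcq).2, fun x hx y hy => ?_⟩
    rw [hlp] at hx
    cases hx
    exact (List.isChain_cons.1 hcq).1 y hy
  · cases t with
    | nil =>
        simp only [List.getLast?_singleton, Option.some.injEq] at hlq
        rw [List.append_nil, hlp, hlq]
    | cons y t'' =>
        rw [List.getLast?_append]
        rw [show ((y :: t'').getLast? = some c) from hlq]
        rfl
  · intro z hz
    rcases List.mem_append.1 hz with h | h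
    · exact Or.inl h
    · exact Or.inr (List.mem_cons_of_mem _ h)

lemma reach_trans (h1 : Reach G a b) (h2 : Reach G b c) : Reach G a c := by
  obtain ⟨p, hp⟩ := h1; obtain ⟨q, hq⟩ := h2
  obtain ⟨r, hr, -⟩ := isWalk_trans hp hq
  exact ⟨r, hr⟩

lemma chain'_del : ∀ {p : List V}, List.Chain' G p → (∀ z ∈ p, z ≠ u) →
    List.Chain' (DelVertex G u) p
  | [], _, _ => List.isChain_nil
  | [a], _, _ => List.isChain_singleton a
  | a :: b :: t, h, hz => by
      rw [List.Chain', List.isChain_cons_cons] at h ⊢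
      exact ⟨⟨h.1, hz a (by simp), hz b (by simp)⟩,
        chain'_del h.2 (fun z hz' => hz z (List.mem_cons_of_mem _ hz'))⟩

lemma isWalk_del_of_avoid (h : IsWalk G a b p) (hz : ∀ z ∈ p, z ≠ u) :
    IsWalk (DelVertex G u) a b p :=
  ⟨chain'_del h.1 hz, h.2.1, h.2.2⟩

lemma IsWalk.of_del (h : IsWalk (DelVertex G u) a b p) : IsWalk G a b p :=
  ⟨h.1.imp (fun _ _ hab => hab.1), h.2.1, h.2.2⟩

lemma chain'_del_ne : ∀ {a : V} {t : List V}, List.Chain' (DelVertex G u) (a :: t) →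
    a ≠ u → ∀ z ∈ a :: t, z ≠ u
  | a, [], _, ha => by simpa using ha
  | a, b :: t, h, ha => by
      rw [List.Chain', List.isChain_cons_cons] at h
      intro z hz
      rcases List.mem_cons.1 hz with rfl | hz'
      · exact ha
      · exact chain'_del_ne h.2 h.1.2.2 z hz'

lemma walk_del_ne (h : IsWalk (DelVertex G u) a b p) (hab : a ≠ u ∨ b ≠ u) :
    ∀ z ∈ p, z ≠ u := by
  obtain ⟨t, rfl⟩ := h.cons_form
  obtain ⟨hc, -, hl⟩ := h
  cases t with
  | nil =>
      simp only [List.getLast?_singleton, Option.some.injEq] at hl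
      subst hl
      intro z hz
      rcases List.mem_singleton.1 hz with rfl
      rcases hab with h | h <;> exact h
  | cons y t' =>
      have ha : a ≠ u := ((List.isChain_cons_cons.1 hc).1).2.1
      exact chain'_del_ne hc ha

lemma dom_self (G : V → V → Prop) (s u : V) : Dom G s u u := fun p hp =>
  List.mem_of_getLast? hp.2.2

lemma not_dom_iff {s w : V} : ¬ Dom G s u w ↔ ∃ p, IsWalk G s w p ∧ u ∉ p := by
  unfold Dom; push_neg; rfl

end Aux

/-- If `u` is a strong articulation point that is a common nontrivial dominator of
`G_s` and `G_s^R`, then `V \ (D(u) ∪ D^R(u))` is a strongly connected component of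
`G \ u`. -/
theorem stmt16 (G : V → V → Prop) (hG : StronglyConnected G) (s u : V)
    (hsap : IsStrongArticulationPoint G u)
    (hnd : NontrivialDom G s u) (hndR : NontrivialDom (Rev G) s u) :
    IsSCC (DelVertex G u) {w | ¬ Dom G s u w ∧ ¬ Dom (Rev G) s u w} := by
  obtain ⟨hus, -⟩ := hnd
  -- s is in the set
  have hsC : ¬ Dom G s u s ∧ ¬ Dom (Rev G) s u s := by
    constructor <;>
    · intro h
      have := h [s] (isWalk_singleton _ s)
      exact hus (List.mem_singleton.1 this)
  -- key reachability lemmas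
  have key1 : ∀ x, ¬ Dom G s u x → Reach (DelVertex G u) s x := by
    intro x hx
    obtain ⟨p, hp, hup⟩ := not_dom_iff.1 hx
    exact ⟨p, isWalk_del_of_avoid hp (fun z hz h => hup (h ▸ hz))⟩
  have key2 : ∀ x, ¬ Dom (Rev G) s u x → Reach (DelVertex G u) x s := by
    intro x hx
    obtain ⟨p, hp, hup⟩ := not_dom_iff.1 hx
    have hrev : IsWalk G x s p.reverse := isWalk_rev (G := Rev G) hp
    refine ⟨p.reverse, isWalk_del_of_avoid hrev (fun z hz h => ?_)⟩
    exact hup (h ▸ (List.mem_reverse.1 hz))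
  refine ⟨⟨s, hsC⟩, ?_, ?_⟩
  · rintro x ⟨hx1, hx2⟩ y ⟨hy1, hy2⟩
    exact ⟨reach_trans (key2 x hx2) (key1 y hy1), reach_trans (key2 y hy2) (key1 x hx1)⟩
  · rintro x ⟨hx1, hx2⟩ y ⟨⟨p, hp⟩, ⟨q, hq⟩⟩
    have hxu : x ≠ u := fun h => hx1 (h ▸ dom_self G s u)
    have hpne := walk_del_ne hp (Or.inl hxu)
    have hqne := walk_del_ne hq (Or.inr hxu)
    constructor
    · -- ¬ Dom G s u y
      obtain ⟨p0, hp0, hp0u⟩ := not_dom_iff.1 hx1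
      obtain ⟨r, hr, hrmem⟩ := isWalk_trans hp0 hp.of_del
      refine not_dom_iff.2 ⟨r, hr, fun hur => ?_⟩
      rcases hrmem u hur with h | h
      · exact hp0u h
      · exact hpne u h rfl
    · -- ¬ Dom (Rev G) s u y
      obtain ⟨q0, hq0, hq0u⟩ := not_dom_iff.1 hx2
      have hqrev : IsWalk (Rev G) x y q.reverse := isWalk_rev hq.of_del
      obtain ⟨r, hr, hrmem⟩ := isWalk_trans hq0 hqrev
      refine not_dom_iff.2 ⟨r, hr, fun hur => ?_⟩
      rcases hrmem u hur with h | h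
      · exact hq0u h
      · exact hqne u (List.mem_reverse.1 h) rfl

end StrongConn
end

section
/- Let G be a strongly connected digraph with start vertex s, and let x and y be vertices with nearest common ancestor w in the loop nesting tree H and w^R in H^R. A strong articulation point u is a separating vertex for x and y if and only if (1) u is an ancestor of x or of y in the dominator tree D and w is not a proper descendant of u in D, or (2) u is an ancestor of x or of y in D^R and w^R is not a proper descendant of u in D^R. -/
namespace StrongConn

variable {V : Type*}

/-! ### Auxiliary infrastructure for the proof of `stmt19` -/

open Relation List Function

/-- The restriction of `G` to vertices satisfying `P`. -/
def Res (G : V → V → Prop) (P : V → Prop) : V → V → Prop :=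
  fun a b => G a b ∧ P a ∧ P b

section Walks

variable {G : V → V → Prop} {a b c z : V} {p q : List V} {P : V → Prop}

theorem mem_of_head?_eq (h : p.head? = some a) : a ∈ p := by
  cases p with
  | nil => simp at h
  | cons v t => simp only [List.head?_cons, Option.some.injEq] at h; simp [h]

theorem mem_of_getLast?_eq (h : p.getLast? = some a) : a ∈ p := by
  obtain ⟨hne, rfl⟩ := List.mem_getLast?_eq_getLast (by simp [h] : a ∈ p.getLast?)
  exact List.getLast_mem _

theorem IsWalk.ne_nil (h : IsWalk G a b p) : p ≠ [] := by
  rintro rfl; simp [IsWalk] at h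

theorem IsWalk.head_mem (h : IsWalk G a b p) : a ∈ p := mem_of_head?_eq h.2.1

theorem IsWalk.last_mem (h : IsWalk G a b p) : b ∈ p := mem_of_getLast?_eq h.2.2

theorem walk_singleton : IsWalk G a a [a] := ⟨List.isChain_singleton a, rfl, rfl⟩

theorem IsWalk.concat (h : IsWalk G a b p) (e : G b c) : IsWalk G a c (p ++ [c]) := by
  obtain ⟨hc, hh, hl⟩ := h
  refine ⟨hc.append (List.isChain_singleton c) ?_, ?_, List.getLast?_concat⟩
  · intro x hx y hy
    simp only [List.head?_cons, Option.mem_def, Option.some.injEq] at hy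
    simp only [Option.mem_def, hl, Option.some.injEq] at hx
    subst hx; subst hy; exact e
  · rw [List.head?_append_of_ne_nil _ (by rintro rfl; simp at hh)]; exact hh

theorem IsWalk.append (h1 : IsWalk G a b p) (h2 : IsWalk G b c q) :
    IsWalk G a c (p ++ q.tail) := by
  obtain ⟨c2, hh2, hl2⟩ := h2
  cases q with
  | nil => simp at hh2
  | cons b' t =>
    have hb : b' = b := by simpa using hh2
    cases t with
    | nil =>
      have hbc : b = c := by rw [← hb]; simpa using hl2
      rw [← hbc]
      simpa using h1
    | cons d t' =>
      obtain ⟨c1, hh1, hl1⟩ := h1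
      have hbd : G b d := hb ▸ (List.isChain_cons_cons.mp c2).1
      rw [← hb] at hl1
      refine ⟨?_, ?_, ?_⟩
      · refine c1.append (List.isChain_cons_cons.mp c2).2 ?_
        intro x hx y hy
        simp only [Option.mem_def, hl1, Option.some.injEq] at hx
        have hy' : d = y := by simpa using hy
        rw [← hx, ← hy', hb]
        exact hbd
      · rw [List.head?_append_of_ne_nil _ (by rintro rfl; simp at hh1)]; exact hh1
      · rw [List.getLast?_append_of_ne_nil _ (by simp)]
        simpa using hl2

theorem walk_suffix (h : IsWalk G a b p) (hz : z ∈ p) :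
    ∃ q, IsWalk G z b q ∧ ∀ y ∈ q, y ∈ p := by
  obtain ⟨s', t', rfl⟩ := List.append_of_mem hz
  obtain ⟨hc, hh, hl⟩ := h
  refine ⟨z :: t', ⟨(List.isChain_append.mp hc).2.1, rfl, ?_⟩, fun y hy => List.mem_append_right _ hy⟩
  rw [List.getLast?_append_of_ne_nil _ (by simp)] at hl; exact hl

theorem walk_prefix (h : IsWalk G a b p) (hz : z ∈ p) :
    ∃ q, IsWalk G a z q ∧ ∀ y ∈ q, y ∈ p := by
  obtain ⟨s', t', rfl⟩ := List.append_of_mem hz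
  obtain ⟨hc, hh, hl⟩ := h
  refine ⟨s' ++ [z], ⟨?_, ?_, List.getLast?_concat⟩, ?_⟩
  · exact hc.prefix ⟨t', by simp⟩
  · cases s' with
    | nil => simpa using hh
    | cons e es => simpa using hh
  · intro y hy
    rcases List.mem_append.mp hy with h' | h'
    · exact List.mem_append_left _ h'
    · simp only [List.mem_singleton] at h'; subst h'; exact hz

theorem walk_to_rtg : ∀ (p : List V) {a b}, IsWalk G a b p → (∀ y ∈ p, P y) →
    ReflTransGen (Res G P) a b := by
  intro p
  induction p with
  | nil => intro a b h; exact absurd h.ne_nil (by simp)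
  | cons v t ih =>
    intro a b h hP
    have hav : v = a := by simpa using h.2.1
    subst hav
    cases t with
    | nil =>
      have hvb : v = b := by simpa using h.2.2
      subst hvb; exact ReflTransGen.refl
    | cons v2 t' =>
      have hch := List.isChain_cons_cons.mp h.1
      have hl : (v2 :: t').getLast? = some b := by
        have := h.2.2; rwa [List.getLast?_cons_cons] at this
      have hw2 : IsWalk G v2 b (v2 :: t') := ⟨hch.2, rfl, hl⟩
      exact ReflTransGen.head ⟨hch.1, hP v (by simp), hP v2 (by simp)⟩
        (ih hw2 fun y hy => hP y (List.mem_cons_of_mem _ hy))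

theorem rtg_to_walk (ha : P a) (h : ReflTransGen (Res G P) a b) :
    ∃ p, IsWalk G a b p ∧ ∀ y ∈ p, P y := by
  induction h with
  | refl => exact ⟨[a], walk_singleton, by simpa⟩
  | @tail b' c' h1 h2 ih =>
    obtain ⟨p, hwp, hP⟩ := ih
    refine ⟨p ++ [c'], hwp.concat h2.1, fun y hy => ?_⟩
    rcases List.mem_append.mp hy with h' | h'
    · exact hP y h'
    · simp only [List.mem_singleton] at h'; subst h'; exact h2.2.2

theorem walk_res_isWalk (h : IsWalk (Res G P) a b p) : IsWalk G a b p :=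
  ⟨h.1.imp fun _ _ hab => hab.1, h.2⟩

theorem walk_res_mem : ∀ (p : List V) {a b}, IsWalk (Res G P) a b p → P a → ∀ z ∈ p, P z := by
  intro p
  induction p with
  | nil => intro a b h; exact absurd h.ne_nil (by simp)
  | cons v t ih =>
    intro a b h ha z hz
    have hav : v = a := by simpa using h.2.1
    subst hav
    cases t with
    | nil => simp only [List.mem_singleton] at hz; subst hz; exact ha
    | cons v2 t' =>
      have hch := List.isChain_cons_cons.mp h.1
      have hl : (v2 :: t').getLast? = some b := by
        have := h.2.2; rwa [List.getLast?_cons_cons] at this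
      rcases List.mem_cons.mp hz with rfl | hz'
      · exact ha
      · exact ih ⟨hch.2, rfl, hl⟩ hch.1.2.2 z hz'

theorem reach_iff_rtg : Reach G a b ↔ ReflTransGen G a b := by
  constructor
  · rintro ⟨p, hp⟩
    exact ReflTransGen.mono (r := Res G fun _ => True) (p := G) (fun _ _ h => h.1) _ _ (walk_to_rtg (P := fun _ => True) p hp (by simp))
  · intro h
    obtain ⟨p, hp, -⟩ := rtg_to_walk (P := fun _ => True) trivial
      (ReflTransGen.mono (r := G) (p := Res G fun _ => True) (fun _ _ h => ⟨h, trivial, trivial⟩) _ _ h)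
    exact ⟨p, hp⟩

theorem sconn_iff : SConn G a b ↔ ReflTransGen G a b ∧ ReflTransGen G b a := by
  unfold SConn; rw [reach_iff_rtg, reach_iff_rtg]

theorem exists_argmin (f : V → ℕ) : ∀ (p : List V), p ≠ [] → ∃ m ∈ p, ∀ z ∈ p, f m ≤ f z := by
  intro p
  induction p with
  | nil => simp
  | cons v t ih =>
    intro _
    cases t with
    | nil => exact ⟨v, by simp, by simp⟩
    | cons v2 t' =>
      obtain ⟨m, hm, hmin⟩ := ih (by simp)
      rcases le_total (f v) (f m) with h | h
      · refine ⟨v, by simp, ?_⟩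
        intro z hz
        rcases List.mem_cons.mp hz with rfl | hz'
        · exact le_refl _
        · exact le_trans h (hmin z hz')
      · refine ⟨m, List.mem_cons_of_mem _ hm, ?_⟩
        intro z hz
        rcases List.mem_cons.mp hz with rfl | hz'
        · exact h
        · exact hmin z hz'

end Walks

section DomFacts

variable {G : V → V → Prop} {s u v a b : V}

theorem dom_start : Dom G s s v := fun _ hp => mem_of_head?_eq hp.2.1

theorem not_dom_iff_s19 (hsu : s ≠ u) : ¬ Dom G s u v ↔ ReflTransGen (DelVertex G u) s v := by
  constructor
  · intro h
    rw [Dom, not_forall] at h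
    obtain ⟨p, hp⟩ := h
    rw [Classical.not_imp] at hp
    exact walk_to_rtg (P := fun z => z ≠ u) p hp.1 fun y hy heq => hp.2 (heq ▸ hy)
  · intro h hdom
    obtain ⟨p, hwp, hP⟩ := rtg_to_walk (P := fun z => z ≠ u) hsu h
    exact hP u (hdom p hwp) rfl

theorem rtg_del_rev {x y : V} :
    ReflTransGen (DelVertex (Rev G) u) x y ↔ ReflTransGen (DelVertex G u) y x := by
  rw [← Relation.reflTransGen_swap]
  constructor
  · exact fun h' => ReflTransGen.mono (r := Function.swap (DelVertex (Rev G) u)) (p := DelVertex G u) (fun _ _ h => ⟨h.1, h.2.2, h.2.1⟩) _ _ h'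
  · exact fun h' => ReflTransGen.mono (r := DelVertex G u) (p := Function.swap (DelVertex (Rev G) u)) (fun _ _ h => ⟨h.1, h.2.2, h.2.1⟩) _ _ h'

theorem sconn_del_rev {x y : V} :
    SConn (DelVertex (Rev G) u) x y ↔ SConn (DelVertex G u) x y := by
  rw [sconn_iff, sconn_iff, rtg_del_rev, rtg_del_rev, and_comm]

end DomFacts

section TreeFacts

variable {G : V → V → Prop} {s : V} (T : DFSTree G s)

theorem DFSTree.anc_refl (v : V) : T.Anc v v := ⟨0, rfl⟩

theorem DFSTree.anc_trans {a b c : V} (h1 : T.Anc a b) (h2 : T.Anc b c) : T.Anc a c := by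
  obtain ⟨n, hn⟩ := h1
  obtain ⟨m, hm⟩ := h2
  exact ⟨n + m, by rw [Function.iterate_add_apply, hm, hn]⟩

theorem DFSTree.anc_start (v : V) : T.Anc s v := T.root_reach v

theorem DFSTree.parent_anc (v : V) : T.Anc (T.parent v) v := ⟨1, rfl⟩

theorem DFSTree.pre_le_of_anc {a b : V} (h : T.Anc a b) : T.pre a ≤ T.pre b := by
  obtain ⟨n, hn⟩ := h
  induction n generalizing b with
  | zero => exact le_of_eq (congrArg T.pre hn.symm)
  | succ n ih =>
    rw [Function.iterate_succ_apply] at hn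
    refine le_trans (ih hn) ?_
    by_cases hb : b = s
    · have hbs : T.parent b = b := by rw [hb]; exact T.parent_root
      rw [hbs]
    · exact le_of_lt (T.pre_parent b hb)

theorem DFSTree.pre_lt_of_anc {a b : V} (h : T.Anc a b) (hne : a ≠ b) :
    T.pre a < T.pre b := by
  obtain ⟨n, hn⟩ := h
  cases n with
  | zero => exact absurd hn.symm hne
  | succ n =>
    rw [Function.iterate_succ_apply] at hn
    by_cases hb : b = s
    · have hbs : T.parent b = b := by rw [hb]; exact T.parent_root
      rw [hbs, Function.iterate_fixed hbs] at hn
      exact absurd hn.symm hne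
    · exact lt_of_le_of_lt (T.pre_le_of_anc ⟨n, hn⟩) (T.pre_parent b hb)

theorem DFSTree.anc_antisymm {a b : V} (h1 : T.Anc a b) (h2 : T.Anc b a) : a = b := by
  by_contra hne
  exact absurd (T.pre_lt_of_anc h2 (Ne.symm hne)) (not_lt_of_ge (le_of_lt (T.pre_lt_of_anc h1 hne)))

theorem DFSTree.tree_walk {a b : V} (h : T.Anc a b) :
    ∃ p, IsWalk G a b p ∧ ∀ y ∈ p, T.Anc a y ∧ T.Anc y b := by
  obtain ⟨n, hn⟩ := h
  induction n generalizing b with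
  | zero =>
    subst hn
    exact ⟨[b], walk_singleton, fun y hy => by
      simp only [List.mem_singleton] at hy; subst hy; exact ⟨T.anc_refl _, T.anc_refl _⟩⟩
  | succ n ih =>
    rw [Function.iterate_succ_apply] at hn
    by_cases hb : b = s
    · have hbs : T.parent b = b := by rw [hb]; exact T.parent_root
      rw [hbs, Function.iterate_fixed hbs] at hn
      subst hn
      exact ⟨[b], walk_singleton, fun y hy => by
        simp only [List.mem_singleton] at hy; subst hy; exact ⟨T.anc_refl _, T.anc_refl _⟩⟩
    · obtain ⟨p, hwp, hP⟩ := ih hn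
      refine ⟨p ++ [b], hwp.concat (T.parent_edge b hb), fun y hy => ?_⟩
      rcases List.mem_append.mp hy with h' | h'
      · exact ⟨(hP y h').1, T.anc_trans (hP y h').2 (T.parent_anc b)⟩
      · simp only [List.mem_singleton] at h'; subst h'
        exact ⟨⟨n + 1, by rw [Function.iterate_succ_apply]; exact hn⟩, T.anc_refl _⟩

theorem DFSTree.anc_of_dom {u v : V} (h : Dom G s u v) : T.Anc u v := by
  obtain ⟨p, hwp, hP⟩ := T.tree_walk (T.anc_start v)
  exact (hP u (h p hwp)).2

theorem DFSTree.desc_spread {m : V} :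
    ∀ (p : List V) {a b}, IsWalk G a b p → T.Anc m a →
      (∀ z ∈ p, T.pre m ≤ T.pre z) → ∀ z ∈ p, T.Anc m z := by
  intro p
  induction p with
  | nil => intro a b h; exact absurd h.ne_nil (by simp)
  | cons v t ih =>
    intro a b h ha hmin z hz
    have hav : v = a := by simpa using h.2.1
    subst hav
    cases t with
    | nil => simp only [List.mem_singleton] at hz; subst hz; exact ha
    | cons v2 t' =>
      have hch := List.isChain_cons_cons.mp h.1
      have hl : (v2 :: t').getLast? = some b := by
        have := h.2.2; rwa [List.getLast?_cons_cons] at this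
      have hw2 : IsWalk G v2 b (v2 :: t') := ⟨hch.2, rfl, hl⟩
      have hav2 : T.Anc m v2 := by
        rcases lt_trichotomy (T.pre v) (T.pre v2) with hlt | heq | hgt
        · exact T.anc_trans ha (T.dfs_edge v v2 hch.1 hlt)
        · have : v = v2 := T.pre_inj heq
          exact this ▸ ha
        · exact T.interval m v2 v ha (hmin v2 (by simp)) (le_of_lt hgt)
      rcases List.mem_cons.mp hz with rfl | hz'
      · exact ha
      · exact ih hw2 hav2 (fun z' hz' => hmin z' (List.mem_cons_of_mem _ hz')) z hz'

end TreeFacts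

section LoopFacts

variable {G : V → V → Prop} {s : V} (T : DFSTree G s) {hp : V → V}
  (hlp : IsLoopParent G s T.Anc hp)

include hlp

theorem hanc_tanc {a b : V} (h : HAnc hp a b) : T.Anc a b := by
  obtain ⟨n, hn⟩ := h
  induction n generalizing b with
  | zero => exact hn ▸ T.anc_refl b
  | succ n ih =>
    rw [Function.iterate_succ_apply] at hn
    by_cases hb : b = s
    · have hbs : hp b = b := by rw [hb]; exact hlp.1
      rw [hbs] at hn
      exact ih hn
    · exact T.anc_trans (ih hn) (hlp.2 b hb).1

theorem hanc_inloop {w x : V} (h : HAnc hp w x) : InLoop G T.Anc w x := by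
  obtain ⟨n, hn⟩ := h
  induction n generalizing x with
  | zero =>
    have hxw : x = w := hn
    refine ⟨?_, [x], ?_, fun y hy => ?_⟩
    · rw [hxw]; exact T.anc_refl w
    · rw [hxw]; exact walk_singleton
    · simp only [List.mem_singleton] at hy
      subst hy
      rw [hxw]; exact T.anc_refl w
  | succ n ih =>
    rw [Function.iterate_succ_apply] at hn
    by_cases hxs : x = s
    · have hxx : hp x = x := by rw [hxs]; exact hlp.1
      rw [hxx] at hn
      exact ih hn
    · obtain ⟨h1, h2, h3, h4⟩ := hlp.2 x hxs
      have hwh : T.Anc w (hp x) := hanc_tanc T hlp ⟨n, hn⟩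
      have hwx : T.Anc w x := T.anc_trans hwh h1
      obtain ⟨q1, hq1, hq1P⟩ := h3.2
      have r1 : ReflTransGen (Res G (T.Anc w)) x (hp x) :=
        walk_to_rtg q1 hq1 fun y hy => T.anc_trans hwh (hq1P y hy)
      obtain ⟨q2, hq2, hq2P⟩ := (ih hn).2
      have r2 : ReflTransGen (Res G (T.Anc w)) (hp x) w := walk_to_rtg q2 hq2 hq2P
      obtain ⟨q, hq, hqP⟩ := rtg_to_walk hwx (r1.trans r2)
      exact ⟨hwx, q, hq, hqP⟩

theorem loop_hanc {m : V} : ∀ (n : ℕ) (z : V), T.pre z = n → InLoop G T.Anc m z →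
    HAnc hp m z := by
  intro n
  induction n using Nat.strong_induction_on with
  | _ n ih =>
    intro z hpre hin
    by_cases hzm : z = m
    · exact ⟨0, hzm⟩
    · have hzs : z ≠ s := by
        rintro rfl
        exact hzm (T.anc_antisymm (T.anc_start m) hin.1)
      obtain ⟨h1, h2, h3, h4⟩ := hlp.2 z hzs
      have hmh : T.Anc m (hp z) := h4 m hin.1 (fun h => hzm h.symm) hin
      obtain ⟨q1, hq1, hq1P⟩ := T.tree_walk h1
      obtain ⟨q2, hq2, hq2P⟩ := hin.2
      have r1 : ReflTransGen (Res G (T.Anc m)) (hp z) z :=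
        walk_to_rtg q1 hq1 fun y hy => T.anc_trans hmh (hq1P y hy).1
      have r2 : ReflTransGen (Res G (T.Anc m)) z m := walk_to_rtg q2 hq2 hq2P
      obtain ⟨q, hq, hqP⟩ := rtg_to_walk hmh (r1.trans r2)
      have hin' : InLoop G T.Anc m (hp z) := ⟨hmh, q, hq, hqP⟩
      have hlt : T.pre (hp z) < T.pre z := T.pre_lt_of_anc h1 h2
      obtain ⟨k, hk⟩ := ih (T.pre (hp z)) (hpre ▸ hlt) (hp z) rfl hin'
      exact ⟨k + 1, by rw [Function.iterate_succ_apply, hk]⟩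

theorem sconn_del_of_hanc {u w x : V} (hdom : Dom G s u w) (hwu : w ≠ u)
    (hx : HAnc hp w x) :
    ReflTransGen (DelVertex G u) x w ∧ ReflTransGen (DelVertex G u) w x := by
  have hanc : T.Anc u w := T.anc_of_dom hdom
  have hne : ∀ y, T.Anc w y → y ≠ u := by
    rintro y hy rfl
    exact hwu (T.anc_antisymm hy hanc)
  constructor
  · obtain ⟨-, q, hq, hqP⟩ := hanc_inloop T hlp hx
    exact walk_to_rtg (P := fun z => z ≠ u) q hq fun y hy => hne y (hqP y hy)
  · obtain ⟨q, hq, hqP⟩ := T.tree_walk (hanc_tanc T hlp hx)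
    exact walk_to_rtg (P := fun z => z ≠ u) q hq fun y hy => hne y (hqP y hy).1

theorem dom_nca_of_sconn {u x y w : V} (hxu : x ≠ u)
    (hsc : SConn (DelVertex G u) x y) (hdx : Dom G s u x)
    (hw : HNca hp x y w) : Dom G s u w ∧ w ≠ u := by
  obtain ⟨⟨p1, hp1⟩, ⟨p2, hp2⟩⟩ := hsc
  have hp1u : ∀ z ∈ p1, z ≠ u := walk_res_mem (P := fun z => z ≠ u) p1 hp1 hxu
  have hyu : y ≠ u := hp1u y hp1.last_mem
  have hp2u : ∀ z ∈ p2, z ≠ u := walk_res_mem (P := fun z => z ≠ u) p2 hp2 hyu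
  have hw1 : IsWalk G x y p1 := walk_res_isWalk hp1
  have hw2 : IsWalk G y x p2 := walk_res_isWalk hp2
  have hcw : IsWalk G x x (p1 ++ p2.tail) := hw1.append hw2
  set c := p1 ++ p2.tail with hc
  have hcu : ∀ z ∈ c, z ≠ u := by
    intro z hz
    rcases List.mem_append.mp hz with h' | h'
    · exact hp1u z h'
    · exact hp2u z (List.mem_of_mem_tail h')
  have hcsub : ∀ z ∈ c, z ∈ c := fun z hz => hz
  have hyc : y ∈ c := List.mem_append_left _ hw1.last_mem
  obtain ⟨m, hm, hmin⟩ := exists_argmin T.pre c hcw.ne_nil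
  -- walk from m to x within c
  obtain ⟨qmx, hqmx, hqmxc⟩ := walk_suffix hcw hm
  have hdescq : ∀ z ∈ qmx, T.Anc m z :=
    T.desc_spread qmx hqmx (T.anc_refl m) fun z hz => hmin z (hqmxc z hz)
  have hmx : T.Anc m x := hdescq x hqmx.last_mem
  have hdescc : ∀ z ∈ c, T.Anc m z := T.desc_spread c hcw hmx hmin
  -- x ∈ loop(m)
  obtain ⟨qxm, hqxm, hqxmc⟩ := walk_prefix hcw hm
  have hinx : InLoop G T.Anc m x := ⟨hmx, qxm, hqxm, fun z hz => hdescc z (hqxmc z hz)⟩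
  -- y ∈ loop(m)
  obtain ⟨qyx, hqyx, hqyxc⟩ := walk_suffix hcw hyc
  have hiny : InLoop G T.Anc m y := by
    have r1 : ReflTransGen (Res G (T.Anc m)) y x :=
      walk_to_rtg qyx hqyx fun z hz => hdescc z (hqyxc z hz)
    have r2 : ReflTransGen (Res G (T.Anc m)) x m :=
      walk_to_rtg qxm hqxm fun z hz => hdescc z (hqxmc z hz)
    obtain ⟨q, hq, hqP⟩ := rtg_to_walk (hdescc y hyc) (r1.trans r2)
    exact ⟨hdescc y hyc, q, hq, hqP⟩
  have hhx : HAnc hp m x := loop_hanc T hlp (T.pre x) x rfl hinx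
  have hhy : HAnc hp m y := loop_hanc T hlp (T.pre y) y rfl hiny
  have hhw : HAnc hp m w := hw.2.2 m hhx hhy
  have hmw : T.Anc m w := hanc_tanc T hlp hhw
  have hinw : InLoop G T.Anc m w := hanc_inloop T hlp hhw
  have hmu : m ≠ u := hcu m hm
  -- u dominates m
  have hdm : Dom G s u m := by
    by_cases hsu : s = u
    · subst hsu; exact dom_start
    · by_contra hnd
      have rtg1 : ReflTransGen (DelVertex G u) s m := (not_dom_iff_s19 hsu).mp hnd
      have rtg2 : ReflTransGen (DelVertex G u) m x :=
        walk_to_rtg (P := fun z => z ≠ u) qmx hqmx fun z hz => hcu z (hqmxc z hz)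
      exact (not_dom_iff_s19 hsu).mpr (rtg1.trans rtg2) hdx
  have hum : T.Anc u m := T.anc_of_dom hdm
  have hdesc_ne : ∀ z, T.Anc m z → z ≠ u := by
    rintro z hz rfl
    exact hmu (T.anc_antisymm hz hum)
  have hwu : w ≠ u := hdesc_ne w hmw
  refine ⟨?_, hwu⟩
  by_cases hsu : s = u
  · subst hsu; exact dom_start
  · by_contra hnd
    have rtg1 : ReflTransGen (DelVertex G u) s w := (not_dom_iff_s19 hsu).mp hnd
    obtain ⟨qwm, hqwm, hqwmP⟩ := hinw.2
    have rtg2 : ReflTransGen (DelVertex G u) w m :=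
      walk_to_rtg (P := fun z => z ≠ u) qwm hqwm fun z hz => hdesc_ne z (hqwmP z hz)
    have rtg3 : ReflTransGen (DelVertex G u) m x :=
      walk_to_rtg (P := fun z => z ≠ u) qmx hqmx fun z hz => hcu z (hqmxc z hz)
    exact (not_dom_iff_s19 hsu).mpr ((rtg1.trans rtg2).trans rtg3) hdx

end LoopFacts

theorem HNca.symm {hp : V → V} {x y w : V} (h : HNca hp x y w) : HNca hp y x w :=
  ⟨h.2.1, h.1, fun z h1 h2 => h.2.2 z h2 h1⟩

/-- A strong articulation point `u` separates `x` and `y` iff `u` is an ancestor of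
`x` or `y` in `D` and the nearest common ancestor `w` of `x,y` in `H` is not a proper
descendant of `u` in `D`, or the symmetric condition holds in the reverse graph. -/
theorem stmt19 (G : V → V → Prop) (hG : StronglyConnected G) (s u x y : V)
    (hsap : IsStrongArticulationPoint G u)
    (hx : x ≠ u) (hy : y ≠ u)
    (T : DFSTree G s) (TR : DFSTree (Rev G) s)
    (hp hpR : V → V)
    (hlp : IsLoopParent G s T.Anc hp) (hlpR : IsLoopParent (Rev G) s TR.Anc hpR)
    (w wR : V) (hw : HNca hp x y w) (hwR : HNca hpR x y wR) :
    ¬ SConn (DelVertex G u) x y ↔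
      ((Dom G s u x ∨ Dom G s u y) ∧ ¬ (Dom G s u w ∧ w ≠ u)) ∨
        ((Dom (Rev G) s u x ∨ Dom (Rev G) s u y) ∧ ¬ (Dom (Rev G) s u wR ∧ wR ≠ u)) := by
  have key : SConn (DelVertex G u) x y ↔
      ¬((Dom G s u x ∨ Dom G s u y) ∧ ¬(Dom G s u w ∧ w ≠ u)) ∧
      ¬((Dom (Rev G) s u x ∨ Dom (Rev G) s u y) ∧ ¬(Dom (Rev G) s u wR ∧ wR ≠ u)) := by
    constructor
    · intro hsc
      constructor
      · rintro ⟨h1, hnw⟩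
        refine hnw ?_
        rcases h1 with hdx | hdy
        · exact dom_nca_of_sconn T hlp hx hsc hdx hw
        · exact dom_nca_of_sconn T hlp hy ⟨hsc.2, hsc.1⟩ hdy hw.symm
      · rintro ⟨h1, hnw⟩
        have hscR : SConn (DelVertex (Rev G) u) x y := sconn_del_rev.mpr hsc
        refine hnw ?_
        rcases h1 with hdx | hdy
        · exact dom_nca_of_sconn TR hlpR hx hscR hdx hwR
        · exact dom_nca_of_sconn TR hlpR hy ⟨hscR.2, hscR.1⟩ hdy hwR.symm
    · rintro ⟨hA, hB⟩
      by_cases h1 : Dom G s u x ∨ Dom G s u y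
      · have hwp : Dom G s u w ∧ w ≠ u := by
          by_contra hnw; exact hA ⟨h1, hnw⟩
        obtain ⟨rxw, rwx⟩ := sconn_del_of_hanc T hlp hwp.1 hwp.2 hw.1
        obtain ⟨ryw, rwy⟩ := sconn_del_of_hanc T hlp hwp.1 hwp.2 hw.2.1
        exact sconn_iff.mpr ⟨rxw.trans rwy, ryw.trans rwx⟩
      by_cases h2 : Dom (Rev G) s u x ∨ Dom (Rev G) s u y
      · have hwp : Dom (Rev G) s u wR ∧ wR ≠ u := by
          by_contra hnw; exact hB ⟨h2, hnw⟩
        obtain ⟨rxw, rwx⟩ := sconn_del_of_hanc TR hlpR hwp.1 hwp.2 hwR.1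
        obtain ⟨ryw, rwy⟩ := sconn_del_of_hanc TR hlpR hwp.1 hwp.2 hwR.2.1
        exact sconn_del_rev.mp (sconn_iff.mpr ⟨rxw.trans rwy, ryw.trans rwx⟩)
      · push_neg at h1 h2
        have hsu : s ≠ u := by
          rintro rfl; exact h1.1 dom_start
        have rsx : ReflTransGen (DelVertex G u) s x := (not_dom_iff_s19 hsu).mp h1.1
        have rsy : ReflTransGen (DelVertex G u) s y := (not_dom_iff_s19 hsu).mp h1.2
        have rxs : ReflTransGen (DelVertex G u) x s :=
          rtg_del_rev.mp ((not_dom_iff_s19 hsu).mp h2.1)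
        have rys : ReflTransGen (DelVertex G u) y s :=
          rtg_del_rev.mp ((not_dom_iff_s19 hsu).mp h2.2)
        exact sconn_iff.mpr ⟨rxs.trans rsy, rys.trans rsx⟩
  constructor
  · intro hns
    by_contra hc
    rw [not_or] at hc
    exact hns (key.mpr hc)
  · rintro (hA | hB) hsc
    · exact (key.mp hsc).1 hA
    · exact (key.mp hsc).2 hB

end StrongConn
end
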